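/- arXiv:0911.2415 — 4 statements merged into one kernel-verified Lean document; each statement's English description precedes it below -/
import Mathlib

section
/- For every nonnegative integer n, the sum over k from 0 to n of binomial(2n-k, k) / (-4)^k equals (2n+1)/4^n. -/
open Finset

private def T (m : ℕ) : ℚ := ∑ k ∈ Finset.range (m + 1), ((m - k).choose k : ℚ) / (-4 : ℚ) ^ k

private lemma T_rec (m : ℕ) : T (m + 2) = T (m + 1) + (-1/4) * T m := by
  have h1 : T (m + 2) =
      (∑ i ∈ range (m + 2), ((m + 1 - i).choose (i+1) : ℚ) / (-4 : ℚ) ^ (i+1)) + 1 := by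
    rw [T, Finset.sum_range_succ']
    have : ∀ i ∈ range (m + 2),
        ((m + 2 - (i+1)).choose (i+1) : ℚ) / (-4 : ℚ) ^ (i+1)
        = ((m + 1 - i).choose (i+1) : ℚ) / (-4 : ℚ) ^ (i+1) := by
      intro i _
      rw [show m + 2 - (i+1) = m + 1 - i from by omega]
    rw [Finset.sum_congr rfl this]
    norm_num
  have pascal : ∀ i ∈ range (m + 2),
      ((m + 1 - i).choose (i+1) : ℚ) / (-4 : ℚ) ^ (i+1) =
      ((m - i).choose (i+1) : ℚ) / (-4 : ℚ) ^ (i+1)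
        + ((m - i).choose i : ℚ) / (-4 : ℚ) ^ (i+1) := by
    intro i _
    rcases le_or_gt i m with h | h
    · rw [show m + 1 - i = (m - i) + 1 from by omega, Nat.choose_succ_succ']
      push_cast
      ring
    · rw [show m + 1 - i = 0 from by omega, show m - i = 0 from by omega,
        Nat.choose_eq_zero_of_lt (show 0 < i + 1 by omega),
        Nat.choose_eq_zero_of_lt (show 0 < i by omega)]
      simp
  rw [Finset.sum_congr rfl pascal, Finset.sum_add_distrib] at h1
  have hA : (∑ i ∈ range (m + 2), ((m - i).choose (i+1) : ℚ) / (-4 : ℚ) ^ (i+1))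
      = T (m + 1) - 1 := by
    rw [T]
    conv_rhs => rw [Finset.sum_range_succ']
    rw [Finset.sum_range_succ]
    rw [show m - (m+1) = 0 from by omega, Nat.choose_eq_zero_of_lt (by omega : 0 < m + 1 + 1)]
    have : ∀ i ∈ range (m+1),
        ((m + 1 - (i+1)).choose (i+1) : ℚ) / (-4 : ℚ) ^ (i+1)
        = ((m - i).choose (i+1) : ℚ) / (-4 : ℚ) ^ (i+1) := by
      intro i _
      rw [show m + 1 - (i+1) = m - i from by omega]
    rw [Finset.sum_congr rfl this]
    norm_num
  have hB : (∑ i ∈ range (m + 2), ((m - i).choose i : ℚ) / (-4 : ℚ) ^ (i+1))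
      = (-1/4) * T m := by
    rw [T, Finset.mul_sum, Finset.sum_range_succ]
    rw [show m - (m+1) = 0 from by omega, Nat.choose_eq_zero_of_lt (by omega : 0 < m + 1)]
    push_cast
    rw [zero_div, add_zero]
    apply Finset.sum_congr rfl
    intro i _
    rw [pow_succ]
    ring
  rw [hA, hB] at h1
  rw [h1]
  ring

private lemma T_eq (m : ℕ) : T m = (m + 1) / 2 ^ m := by
  induction m using Nat.twoStepInduction with
  | zero => simp [T]
  | one =>
    rw [T]
    rw [Finset.sum_range_succ, Finset.sum_range_succ, Finset.sum_range_zero]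
    norm_num
  | more m ih1 ih2 =>
    rw [T_rec, ih1, ih2]
    push_cast
    field_simp
    ring

theorem stmt_7 (n : ℕ) :
    ∑ k ∈ Finset.range (n + 1), ((2 * n - k).choose k : ℚ) / (-4 : ℚ) ^ k =
    (2 * n + 1) / 4 ^ n := by
  have h : ∑ k ∈ Finset.range (n + 1), ((2 * n - k).choose k : ℚ) / (-4 : ℚ) ^ k
      = T (2 * n) := by
    rw [T]
    apply Finset.sum_subset
    · intro x hx; simp only [mem_range] at *; omega
    · intro x hx hx2
      simp only [mem_range] at *
      rw [Nat.choose_eq_zero_of_lt (by omega)]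
      simp
  rw [h, T_eq]
  rw [show (4 : ℚ) ^ n = 2 ^ (2 * n) from by
    rw [show (4:ℚ) = 2^2 by norm_num, ← pow_mul]]
  push_cast
  ring
end

section
/- For every nonnegative integer n, the sum over k from 0 to 2n of (-1)^k * binomial(2n, k)^3 equals (-1)^n * (3n)!/(n!)^3. -/
open Finset

/-- Cast version of `Nat.choose_mul_succ_eq`, valid for all `k`. -/
lemma cast_choose_mul_succ (m k : ℕ) :
    ((m + 1).choose k : ℚ) * ((m : ℚ) + 1 - k) = (m.choose k : ℚ) * ((m : ℚ) + 1) := by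
  rcases le_or_gt k (m + 1) with h | h
  · have := Nat.choose_mul_succ_eq m k
    have hcast : ((m + 1 - k : ℕ) : ℚ) = (m : ℚ) + 1 - k := by
      push_cast [h]; ring
    calc ((m + 1).choose k : ℚ) * ((m : ℚ) + 1 - k)
        = (((m + 1).choose k * (m + 1 - k) : ℕ) : ℚ) := by push_cast [hcast]; ring
      _ = ((m.choose k * (m + 1) : ℕ) : ℚ) := by rw [← this]
      _ = (m.choose k : ℚ) * ((m : ℚ) + 1) := by push_cast; ring
  · rw [Nat.choose_eq_zero_of_lt h, Nat.choose_eq_zero_of_lt (by omega)]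
    simp

/-- Cast version of `Nat.choose_succ_right_eq`, valid for all `k`. -/
lemma cast_choose_succ_right (m k : ℕ) :
    (m.choose (k + 1) : ℚ) * ((k : ℚ) + 1) = (m.choose k : ℚ) * ((m : ℚ) - k) := by
  rcases le_or_gt k m with h | h
  · have := Nat.choose_succ_right_eq m k
    have hcast : ((m - k : ℕ) : ℚ) = (m : ℚ) - k := by push_cast [h]; ring
    calc (m.choose (k + 1) : ℚ) * ((k : ℚ) + 1)
        = ((m.choose (k + 1) * (k + 1) : ℕ) : ℚ) := by push_cast; ring
      _ = ((m.choose k * (m - k) : ℕ) : ℚ) := by rw [this]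
      _ = (m.choose k : ℚ) * ((m : ℚ) - k) := by push_cast [hcast]; ring
  · rw [Nat.choose_eq_zero_of_lt h, Nat.choose_eq_zero_of_lt (by omega)]
    simp

/-- The Zeilberger certificate polynomial (times 2). -/
noncomputable def Qc (n k : ℚ) : ℚ :=
  2*(-58 - 392*n - 1042*n^2 - 1364*n^3 - 880*n^4 - 224*n^5)
  + (207 + 1113*n + 2214*n^2 + 1932*n^3 + 624*n^4) * k
  + (-147 - 594*n - 792*n^2 - 348*n^3) * k^2
  + (48 + 132*n + 90*n^2) * k^3
  + (-6 - 9*n) * k^4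

noncomputable def Gc (n : ℕ) (k : ℕ) : ℚ :=
  (-1 : ℚ)^k * ((2*n+2).choose k : ℚ)^3 * (k : ℚ)^3 * Qc n k

noncomputable def S (n : ℕ) : ℚ :=
  ∑ k ∈ Finset.range (2 * n + 1), (-1 : ℚ) ^ k * ((2 * n).choose k : ℚ) ^ 3

lemma per_k (n k : ℕ) :
    2 * ((2*n+1 : ℚ)*(2*n+2))^3 *
      (((n:ℚ)+1)^2 * ((-1:ℚ)^k * (((2*n+2)).choose k : ℚ)^3)
        + 3*(3*n+1)*(3*n+2) * ((-1:ℚ)^k * (((2*n)).choose k : ℚ)^3))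
    = Gc n (k+1) - Gc n k := by
  have e1 : (((2*n+2)).choose (k+1) : ℚ) * ((k:ℚ)+1)
      = (((2*n+2)).choose k : ℚ) * ((2*n+2 : ℚ) - k) := by
    have := cast_choose_succ_right (2*n+2) k
    push_cast at this ⊢; linarith
  have e2 : (((2*n+2)).choose k : ℚ) * ((2*n+2 : ℚ) - k)
      = (((2*n+1)).choose k : ℚ) * ((2*n+2 : ℚ)) := by
    have := cast_choose_mul_succ (2*n+1) k
    push_cast at this ⊢; linarith
  have e3 : (((2*n+1)).choose k : ℚ) * ((2*n+1 : ℚ) - k)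
      = (((2*n)).choose k : ℚ) * ((2*n+1 : ℚ)) := by
    have := cast_choose_mul_succ (2*n) k
    push_cast at this ⊢; linarith
  have E1 : (((2*n+2)).choose (k+1) : ℚ)^3 * ((k:ℚ)+1)^3
      = (((2*n+2)).choose k : ℚ)^3 * ((2*n+2 : ℚ) - k)^3 := by
    have := congrArg (· ^ 3) e1; simpa [mul_pow] using this
  have E2 : (((2*n+2)).choose k : ℚ)^3 * ((2*n+2 : ℚ) - k)^3
      = (((2*n+1)).choose k : ℚ)^3 * ((2*n+2 : ℚ))^3 := by
    have := congrArg (· ^ 3) e2; simpa [mul_pow] using this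
  have E3 : (((2*n+1)).choose k : ℚ)^3 * ((2*n+1 : ℚ) - k)^3
      = (((2*n)).choose k : ℚ)^3 * ((2*n+1 : ℚ))^3 := by
    have := congrArg (· ^ 3) e3; simpa [mul_pow] using this
  simp only [Gc, Qc, pow_succ]
  push_cast
  linear_combination
    ((-1:ℚ)^k *
      (2*(-58 - 392*(n:ℚ) - 1042*n^2 - 1364*n^3 - 880*n^4 - 224*n^5)
        + (207 + 1113*n + 2214*n^2 + 1932*n^3 + 624*n^4) * ((k:ℚ)+1)
        + (-147 - 594*n - 792*n^2 - 348*n^3) * ((k:ℚ)+1)^2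
        + (48 + 132*n + 90*n^2) * ((k:ℚ)+1)^3
        + (-6 - 9*n) * ((k:ℚ)+1)^4)) * E1
    + (-6*(3*(n:ℚ)+1)*(3*n+2) * ((2*(n:ℚ)+1) - k)^3 * (-1:ℚ)^k) * E2
    + (-6*(3*(n:ℚ)+1)*(3*n+2) * (2*(n:ℚ)+2)^3 * (-1:ℚ)^k) * E3

lemma Srec (n : ℕ) :
    ((n:ℚ)+1)^2 * S (n+1) + 3*(3*(n:ℚ)+1)*(3*n+2) * S n = 0 := by
  have hS1 : S (n+1) = ∑ k ∈ Finset.range (2*n+3), (-1:ℚ)^k * ((2*n+2).choose k : ℚ)^3 := by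
    unfold S
    simp only [show 2*(n+1) = 2*n+2 from by ring]
  have hS0 : ∑ k ∈ Finset.range (2*n+3), (-1:ℚ)^k * ((2*n).choose k : ℚ)^3 = S n := by
    unfold S
    rw [show 2*n+3 = (2*n+1) + 1 + 1 from rfl, Finset.sum_range_succ, Finset.sum_range_succ,
      Nat.choose_eq_zero_of_lt (show 2*n < 2*n+1+1 by omega),
      Nat.choose_eq_zero_of_lt (show 2*n < 2*n+1 by omega)]
    norm_num
  have key : 2 * ((2*(n:ℚ)+1)*(2*n+2))^3 *
      (((n:ℚ)+1)^2 * S (n+1) + 3*(3*(n:ℚ)+1)*(3*n+2) * S n)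
      = ∑ k ∈ Finset.range (2*n+3), (Gc n (k+1) - Gc n k) := by
    rw [hS1, ← hS0]
    simp only [mul_add, Finset.mul_sum, ← Finset.sum_add_distrib]
    apply Finset.sum_congr rfl
    intro k _
    have := per_k n k
    push_cast at this ⊢
    linarith
  rw [Finset.sum_range_sub] at key
  have h0 : Gc n 0 = 0 := by simp [Gc]
  have h1 : Gc n (2*n+3) = 0 := by
    unfold Gc
    rw [Nat.choose_eq_zero_of_lt (by omega)]
    simp
  rw [h0, h1, sub_zero] at key
  have hne : 2 * ((2*(n:ℚ)+1)*(2*n+2))^3 ≠ 0 := by positivity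
  exact (mul_eq_zero.mp key).resolve_left hne

lemma Sval (n : ℕ) : S n = (-1 : ℚ) ^ n * ((3 * n).factorial : ℚ) / ((n.factorial : ℚ)) ^ 3 := by
  induction n with
  | zero => simp [S]
  | succ m ih =>
    have hrec := Srec m
    have hS : S (m+1) = -(3*(3*(m:ℚ)+1)*(3*m+2)) / ((m:ℚ)+1)^2 * S m := by
      have hne : ((m:ℚ)+1)^2 ≠ 0 := by positivity
      field_simp
      linarith
    rw [hS, ih]
    have h3 : (3 * (m+1)) = (3*m+2) + 1 := by ring
    rw [h3, Nat.factorial_succ, show 3*m+2 = (3*m+1)+1 from rfl, Nat.factorial_succ,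
      show 3*m+1 = (3*m)+1 from rfl, Nat.factorial_succ, Nat.factorial_succ]
    have hfne : ((m.factorial : ℚ)) ≠ 0 := Nat.cast_ne_zero.mpr m.factorial_ne_zero
    have hne : ((m:ℚ)+1) ≠ 0 := by positivity
    push_cast
    field_simp
    ring

theorem stmt_15 (n : ℕ) :
    ∑ k ∈ Finset.range (2 * n + 1), (-1 : ℚ) ^ k * ((2 * n).choose k : ℚ) ^ 3 =
    (-1 : ℚ) ^ n * ((3 * n).factorial : ℚ) / ((n.factorial : ℚ)) ^ 3 := by
  exact Sval n
end

section
/- For every odd positive integer n, the sum over k from 0 to n of binomial(n,k)^3 * (-1)^k * H_k equals ((-1)^((n+1)/2)/3) * (3n)!!/((n!!)^3), where H_k = 1 + 1/2 + ... + 1/k is the k-th harmonic number and (2m+1)!! = product of odd numbers 1*3*...*(2m+1). -/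
open Finset

private def Pq (x y : ℚ) : ℚ :=
  3*(3*x+4)*y^4 - 3*(3*x+4)*(5*x+8)*y^3
  + 3*(29*x^3+132*x^2+198*x+98)*y^2
  - 3*(26*x^4+161*x^3+369*x^2+371*x+138)*y
  + (28*x^5+220*x^4+682*x^3+1042*x^2+784*x+232)

private def Qq (x y : ℚ) : ℚ := y^3 * Pq x y

private def sg (x y : ℚ) : ℚ := (7*x^3+42*x^2+87*x+58)*y - (6*x+8)*y^3

private def gq (x y : ℚ) : ℚ :=
  y^2 * Pq x y - ((x+2-y)^3 * sg x (y+1) + y^3 * sg x y)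

private lemma gq_symm (x y : ℚ) : gq x (x+2-y) = gq x y := by
  unfold gq Pq sg; ring

private def Ghat (n k : ℕ) : ℚ := (-1)^(k+1) * (((n+2).choose k : ℚ))^3 * Qq n k
private def wterm (n j : ℕ) : ℚ := (-1)^j * (((n+2).choose j : ℚ))^3 * (j:ℚ)^2 * Pq n j
private def Tt (n j : ℕ) : ℚ := (-1)^j * (((n+2).choose j : ℚ))^3 * (j:ℚ)^3 * sg n j
private def uu (n j : ℕ) : ℚ := (-1)^j * (((n+2).choose j : ℚ))^3 * gq n j

private noncomputable def Hh (k : ℕ) : ℚ := ∑ j ∈ Icc 1 k, (1:ℚ)/j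

private noncomputable def Bsum (N : ℕ) : ℚ :=
  ∑ k ∈ range (N+1), ((N.choose k : ℚ))^3 * (-1)^k * Hh k

private noncomputable def Rf (N : ℕ) : ℚ :=
  (-1 : ℚ) ^ ((N + 1) / 2) / 3 *
      ((Nat.doubleFactorial (3 * N) : ℚ) / ((Nat.doubleFactorial N : ℚ)) ^ 3)

private lemma ch1 (N k : ℕ) :
    ((k:ℚ)+1) * (N.choose (k+1) : ℚ) = ((N:ℚ) - k) * (N.choose k : ℚ) := by
  rcases le_or_gt k N with h | h
  · have := Nat.choose_succ_right_eq N k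
    have hc : ((N.choose (k+1) * (k+1) : ℕ) : ℚ) = ((N.choose k * (N - k) : ℕ) : ℚ) := by
      exact_mod_cast congrArg (Nat.cast : ℕ → ℚ) this
    push_cast [Nat.cast_sub h] at hc
    linarith [hc]
  · rw [Nat.choose_eq_zero_of_lt h, Nat.choose_eq_zero_of_lt (Nat.lt_succ_of_lt h)]
    push_cast; ring

private lemma ch2 (N k : ℕ) :
    ((N:ℚ)+1) * (N.choose k : ℚ) = ((N:ℚ)+1-k) * ((N+1).choose k : ℚ) := by
  rcases le_or_gt k (N+1) with h | h
  · have := Nat.choose_mul_succ_eq N k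
    have hc : ((N.choose k * (N+1) : ℕ) : ℚ) = (((N+1).choose k * (N + 1 - k) : ℕ) : ℚ) := by
      exact_mod_cast congrArg (Nat.cast : ℕ → ℚ) this
    push_cast [Nat.cast_sub h] at hc
    linarith [hc]
  · rw [Nat.choose_eq_zero_of_lt (by omega), Nat.choose_eq_zero_of_lt (by omega)]
    push_cast; ring

private lemma ch3 (N k : ℕ) :
    ((N:ℚ)+1) * ((N:ℚ)+2) * (N.choose k : ℚ)
      = ((N:ℚ)+1-k) * ((N:ℚ)+2-k) * ((N+2).choose k : ℚ) := by
  have h1 := ch2 N k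
  have h2 := ch2 (N+1) k
  push_cast at h2
  calc ((N:ℚ)+1) * ((N:ℚ)+2) * (N.choose k : ℚ)
      = ((N:ℚ)+2) * (((N:ℚ)+1) * (N.choose k : ℚ)) := by ring
    _ = ((N:ℚ)+2) * (((N:ℚ)+1-k) * ((N+1).choose k : ℚ)) := by rw [h1]
    _ = ((N:ℚ)+1-k) * (((N:ℚ)+1+1) * ((N+1).choose k : ℚ)) := by ring
    _ = ((N:ℚ)+1-k) * (((N:ℚ)+1+1-k) * ((N+1+1).choose k : ℚ)) := by rw [h2]
    _ = ((N:ℚ)+1-k) * ((N:ℚ)+2-k) * ((N+2).choose k : ℚ) := by ring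

private lemma cert (n k : ℕ) :
    ((n:ℚ)+1)^3*((n:ℚ)+2)^3 *
      ( ((n:ℚ)+2)^2 * (((n+2).choose k : ℚ))^3 * (-1)^k
        + 3*(3*(n:ℚ)+2)*(3*(n:ℚ)+4) * ((n.choose k : ℚ))^3 * (-1)^k )
    = Ghat n (k+1) - Ghat n k := by
  have k1 : ((k:ℚ)+1) ≠ 0 := by positivity
  apply mul_left_cancel₀ (pow_ne_zero 3 k1)
  have h1 := ch1 (n+2) k
  push_cast at h1
  have h1c := congrArg (fun z : ℚ => z^3) h1
  simp only [mul_pow] at h1c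
  have h2 := ch3 n k
  have h2c := congrArg (fun z : ℚ => z^3) h2
  simp only [mul_pow] at h2c
  unfold Ghat Qq Pq
  push_cast
  linear_combination (-(-1:ℚ)^k *
      (3*(3*(n:ℚ)+4)*((k:ℚ)+1)^7 - 3*(3*(n:ℚ)+4)*(5*(n:ℚ)+8)*((k:ℚ)+1)^6
      + 3*(29*(n:ℚ)^3+132*(n:ℚ)^2+198*(n:ℚ)+98)*((k:ℚ)+1)^5
      - 3*(26*(n:ℚ)^4+161*(n:ℚ)^3+369*(n:ℚ)^2+371*(n:ℚ)+138)*((k:ℚ)+1)^4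
      + (28*(n:ℚ)^5+220*(n:ℚ)^4+682*(n:ℚ)^3+1042*(n:ℚ)^2+784*(n:ℚ)+232)*((k:ℚ)+1)^3)) * h1c
    + (3*(-1:ℚ)^k*(3*(n:ℚ)+2)*(3*(n:ℚ)+4)*((k:ℚ)+1)^3) * h2c

private lemma Hh_succ (k : ℕ) : Hh (k+1) = Hh k + 1/((k:ℚ)+1) := by
  unfold Hh
  rw [Finset.sum_Icc_succ_top (Nat.succ_le_succ (Nat.zero_le k))]
  push_cast; ring

private lemma Ghat_succ (n k : ℕ) :
    Ghat n (k+1) = -(((k:ℚ)+1) * wterm n (k+1)) := by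
  unfold Ghat wterm Qq
  push_cast; ring

private lemma wterm_decomp (n j : ℕ) :
    wterm n j = (Tt n j - Tt n (j+1)) + uu n j := by
  have h1 := ch1 (n+2) j
  push_cast at h1
  have h1c := congrArg (fun z : ℚ => z^3) h1
  simp only [mul_pow] at h1c
  unfold wterm Tt uu gq Pq sg
  push_cast
  linear_combination (-(-1:ℚ)^j *
    ((7*(n:ℚ)^3+42*(n:ℚ)^2+87*(n:ℚ)+58)*((j:ℚ)+1) - (6*(n:ℚ)+8)*((j:ℚ)+1)^3)) * h1c

private lemma uu_reflect (n : ℕ) (hodd : Odd n) {j : ℕ} (hj : j ≤ n + 2) :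
    uu n (n+2-j) = - uu n j := by
  have hs : (-1:ℚ)^(n+2-j) * (-1:ℚ)^j = (-1:ℚ)^(n+2) := by
    rw [← pow_add, Nat.sub_add_cancel hj]
  have hn2 : (-1:ℚ)^(n+2) = -1 := by
    have ho2 : Odd (n+2) := by obtain ⟨t,ht⟩ := hodd; exact ⟨t+1, by omega⟩
    exact ho2.neg_one_pow
  have hb : (-1:ℚ)^j * (-1:ℚ)^j = 1 := by
    rw [← pow_add, ← two_mul, pow_mul]; norm_num
  have hsgn : (-1:ℚ)^(n+2-j) = -(-1:ℚ)^j := by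
    calc (-1:ℚ)^(n+2-j) = (-1:ℚ)^(n+2-j) * ((-1:ℚ)^j * (-1:ℚ)^j) := by rw [hb, mul_one]
      _ = ((-1:ℚ)^(n+2-j) * (-1:ℚ)^j) * (-1:ℚ)^j := by ring
      _ = (-1:ℚ)^(n+2) * (-1:ℚ)^j := by rw [hs]
      _ = -(-1:ℚ)^j := by rw [hn2]; ring
  have hcast : (((n+2-j : ℕ)) : ℚ) = (n:ℚ)+2-j := by
    push_cast [Nat.cast_sub hj]; ring
  unfold uu
  rw [Nat.choose_symm hj, hsgn, hcast]
  have hg : gq (n:ℚ) ((n:ℚ)+2-(j:ℚ)) = gq (n:ℚ) (j:ℚ) := gq_symm (n:ℚ) (j:ℚ)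
  rw [hg]
  ring

private lemma uu_sum (n : ℕ) (hodd : Odd n) :
    ∑ j ∈ range (n+3), uu n j = 0 := by
  have hrefl := Finset.sum_range_reflect (uu n) (n+3)
  have hcongr : ∑ j ∈ range (n+3), uu n (n+3-1-j)
      = ∑ j ∈ range (n+3), (- uu n j) := by
    apply Finset.sum_congr rfl
    intro j hj
    have hj' : j ≤ n + 2 := by
      have := Finset.mem_range.mp hj; omega
    have he : n+3-1-j = n+2-j := by omega
    rw [he, uu_reflect n hodd hj']
  rw [hcongr, Finset.sum_neg_distrib] at hrefl
  linarith [hrefl]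

private lemma Tt_zero_left (n : ℕ) : Tt n 0 = 0 := by
  unfold Tt; norm_num

private lemma Tt_zero_right (n : ℕ) : Tt n (n+3) = 0 := by
  unfold Tt
  rw [Nat.choose_eq_zero_of_lt (by omega)]
  norm_num

private lemma wterm_zero_left (n : ℕ) : wterm n 0 = 0 := by
  unfold wterm; norm_num

private lemma wterm_zero_right (n : ℕ) : wterm n (n+3) = 0 := by
  unfold wterm
  rw [Nat.choose_eq_zero_of_lt (by omega)]
  norm_num

private lemma W_zero (n : ℕ) (hodd : Odd n) :
    ∑ k ∈ range (n+3), wterm n (k+1) = 0 := by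
  have h1 : ∑ j ∈ range (n+4), wterm n j
      = (∑ k ∈ range (n+3), wterm n (k+1)) + wterm n 0 := Finset.sum_range_succ' _ _
  have h2 : ∑ j ∈ range (n+4), wterm n j
      = (∑ j ∈ range (n+3), wterm n j) + wterm n (n+3) := Finset.sum_range_succ _ _
  have h3 : ∑ j ∈ range (n+3), wterm n j = 0 := by
    have hd : ∑ j ∈ range (n+3), wterm n j
        = (∑ j ∈ range (n+3), (Tt n j - Tt n (j+1))) + ∑ j ∈ range (n+3), uu n j := by
      rw [← Finset.sum_add_distrib]
      exact Finset.sum_congr rfl (fun j _ => wterm_decomp n j)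
    rw [hd, Finset.sum_range_sub' (fun j => Tt n j), uu_sum n hodd,
        Tt_zero_left, Tt_zero_right]
    ring
  rw [wterm_zero_left, add_zero] at h1
  rw [wterm_zero_right, add_zero, h3] at h2
  rw [← h1, h2]

private lemma keyk (n k : ℕ) :
    ((n:ℚ)+1)^3*((n:ℚ)+2)^3 *
      ( ((n:ℚ)+2)^2 * (((n+2).choose k : ℚ))^3 * (-1)^k
        + 3*(3*(n:ℚ)+2)*(3*(n:ℚ)+4) * ((n.choose k : ℚ))^3 * (-1)^k ) * Hh k
    = (Ghat n (k+1) * Hh (k+1) - Ghat n k * Hh k) + wterm n (k+1) := by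
  have hc := cert n k
  have hg := Ghat_succ n k
  have hu : ((k:ℚ)+1) * (1/((k:ℚ)+1)) = 1 := by
    have k1 : ((k:ℚ)+1) ≠ 0 := by positivity
    field_simp
  rw [Hh_succ]
  linear_combination (Hh k) * hc - (1/((k:ℚ)+1)) * hg + (wterm n (k+1)) * hu

private lemma Ghat_zero_left (n : ℕ) : Ghat n 0 = 0 := by
  unfold Ghat Qq; norm_num

private lemma Ghat_zero_right (n : ℕ) : Ghat n (n+3) = 0 := by
  unfold Ghat
  rw [Nat.choose_eq_zero_of_lt (by omega)]
  norm_num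

private lemma Bsum_ext (n : ℕ) :
    ∑ k ∈ range (n+3), ((n.choose k : ℚ))^3 * (-1)^k * Hh k = Bsum n := by
  rw [Finset.sum_range_succ, Finset.sum_range_succ]
  rw [Nat.choose_eq_zero_of_lt (by omega : n < n+1),
      Nat.choose_eq_zero_of_lt (by omega : n < n+2)]
  unfold Bsum
  norm_num

private lemma Brec (n : ℕ) (hodd : Odd n) :
    ((n:ℚ)+2)^2 * Bsum (n+2) + 3*(3*(n:ℚ)+2)*(3*(n:ℚ)+4) * Bsum n = 0 := by
  have hsum : ∑ k ∈ range (n+3),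
      (((n:ℚ)+1)^3*((n:ℚ)+2)^3 *
        ( ((n:ℚ)+2)^2 * (((n+2).choose k : ℚ))^3 * (-1)^k
          + 3*(3*(n:ℚ)+2)*(3*(n:ℚ)+4) * ((n.choose k : ℚ))^3 * (-1)^k ) * Hh k)
      = 0 := by
    have h1 : ∑ k ∈ range (n+3),
        (((n:ℚ)+1)^3*((n:ℚ)+2)^3 *
          ( ((n:ℚ)+2)^2 * (((n+2).choose k : ℚ))^3 * (-1)^k
            + 3*(3*(n:ℚ)+2)*(3*(n:ℚ)+4) * ((n.choose k : ℚ))^3 * (-1)^k ) * Hh k)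
        = ∑ k ∈ range (n+3),
            ((Ghat n (k+1) * Hh (k+1) - Ghat n k * Hh k) + wterm n (k+1)) :=
      Finset.sum_congr rfl (fun k _ => keyk n k)
    rw [h1, Finset.sum_add_distrib,
        Finset.sum_range_sub (fun k => Ghat n k * Hh k), W_zero n hodd,
        Ghat_zero_right, Ghat_zero_left]
    ring
  have h2 : ∑ k ∈ range (n+3),
      (((n:ℚ)+1)^3*((n:ℚ)+2)^3 *
        ( ((n:ℚ)+2)^2 * (((n+2).choose k : ℚ))^3 * (-1)^k
          + 3*(3*(n:ℚ)+2)*(3*(n:ℚ)+4) * ((n.choose k : ℚ))^3 * (-1)^k ) * Hh k)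
      = ((n:ℚ)+1)^3*((n:ℚ)+2)^3 * (((n:ℚ)+2)^2 *
          (∑ k ∈ range (n+3), (((n+2).choose k : ℚ))^3 * (-1)^k * Hh k)
        + 3*(3*(n:ℚ)+2)*(3*(n:ℚ)+4) *
          (∑ k ∈ range (n+3), ((n.choose k : ℚ))^3 * (-1)^k * Hh k)) := by
    rw [Finset.mul_sum, Finset.mul_sum, ← Finset.sum_add_distrib, Finset.mul_sum]
    exact Finset.sum_congr rfl (fun k _ => by ring)
  rw [h2] at hsum
  have h3 : ∑ k ∈ range (n+3), (((n+2).choose k : ℚ))^3 * (-1)^k * Hh k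
      = Bsum (n+2) := by
    unfold Bsum; norm_num
  rw [h3, Bsum_ext] at hsum
  have hne : ((n:ℚ)+1)^3*((n:ℚ)+2)^3 ≠ 0 := by positivity
  have := mul_eq_zero.mp hsum
  rcases this with h | h
  · exact absurd h hne
  · exact h

private lemma Rrec (n : ℕ) (hodd : Odd n) :
    ((n:ℚ)+2)^2 * Rf (n+2) + 3*(3*(n:ℚ)+2)*(3*(n:ℚ)+4) * Rf n = 0 := by
  unfold Rf
  have e1 : 3*(n+2) = (3*n+4)+2 := by ring
  have e2 : 3*n+4 = (3*n+2)+2 := by ring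
  have e3 : 3*n+2 = (3*n)+2 := by ring
  rw [e1, Nat.doubleFactorial_add_two, e2, Nat.doubleFactorial_add_two, e3,
      Nat.doubleFactorial_add_two]
  rw [show n+2 = n+2 from rfl, Nat.doubleFactorial_add_two]
  have e4 : (n+2+1)/2 = (n+1)/2 + 1 := by omega
  rw [e4, pow_succ]
  have hdF : ((Nat.doubleFactorial n : ℚ)) ≠ 0 := by
    exact_mod_cast (Nat.doubleFactorial_pos n).ne'
  have hn2 : ((n:ℚ)+2) ≠ 0 := by positivity
  push_cast
  field_simp
  ring

private lemma base_case : Bsum 1 = Rf 1 := by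
  unfold Bsum Rf Hh
  rw [Finset.sum_range_succ, Finset.sum_range_succ]
  norm_num [Nat.doubleFactorial]

private lemma main_lemma : ∀ t : ℕ, Bsum (2*t+1) = Rf (2*t+1) := by
  intro t
  induction t with
  | zero => simpa using base_case
  | succ t ih =>
    have hodd : Odd (2*t+1) := ⟨t, by ring⟩
    have hB := Brec (2*t+1) hodd
    have hR := Rrec (2*t+1) hodd
    have he : 2*(t+1)+1 = (2*t+1)+2 := by ring
    rw [he]
    set n : ℕ := 2*t+1 with hn
    rw [ih] at hB
    have hne : ((n:ℚ)+2)^2 ≠ 0 := by positivity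
    apply mul_left_cancel₀ hne
    linarith [hB, hR]

theorem stmt_16 (n : ℕ) (hn : 0 < n) (hodd : Odd n) :
    ∑ k ∈ Finset.range (n + 1),
      ((n.choose k : ℚ)) ^ 3 * (-1) ^ k * (∑ j ∈ Finset.Icc 1 k, (1 : ℚ) / j) =
    (-1 : ℚ) ^ ((n + 1) / 2) / 3 *
      ((Nat.doubleFactorial (3 * n) : ℚ) / ((Nat.doubleFactorial n : ℚ)) ^ 3) := by
  obtain ⟨t, ht⟩ := hodd
  have heq : n = 2*t+1 := by omega
  subst heq
  have := main_lemma t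
  unfold Bsum Rf Hh at this
  exact this
end

section
/- For every positive integer n, the sum over k from 0 to n of binomial(n+k, 2k) * C_k / (-2)^k equals (-1)^((n-1)/2) * C_{(n-1)/2} / 2^n if n is odd, and equals 0 if n is even, where C_k = binomial(2k,k)/(k+1) is the k-th Catalan number. -/
open Finset

private def Gcert (n j : ℕ) : ℚ :=
  (-2 * j * (j + 1) * (2 * n + 3) * (catalan j) * ((n + 2 + j).choose (2 * j)))
    / ((-2 : ℚ) ^ j * ((n : ℚ) + j + 1) * ((n : ℚ) + j + 2))

private lemma cat_rec (k : ℕ) : (k + 2) * catalan (k + 1) = 2 * (2 * k + 1) * catalan k := by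
  have h1 := Nat.succ_mul_centralBinom_succ k
  have h2 := succ_mul_catalan_eq_centralBinom k
  have h3 := succ_mul_catalan_eq_centralBinom (k + 1)
  have key : (k + 1) * ((k + 2) * catalan (k + 1)) = (k + 1) * (2 * (2 * k + 1) * catalan k) := by
    calc (k + 1) * ((k + 2) * catalan (k + 1))
        = (k + 1) * ((k + 1 + 1) * catalan (k + 1)) := by ring_nf
      _ = (k + 1) * Nat.centralBinom (k + 1) := by rw [h3]
      _ = 2 * (2 * k + 1) * Nat.centralBinom k := h1
      _ = 2 * (2 * k + 1) * ((k + 1) * catalan k) := by rw [h2]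
      _ = (k + 1) * (2 * (2 * k + 1) * catalan k) := by ring
  exact Nat.eq_of_mul_eq_mul_left (Nat.succ_pos k) key

private lemma castA (m r : ℕ) :
    ((m : ℚ) + 1) * (m.choose r) = ((m : ℚ) + 1 - r) * ((m + 1).choose r) := by
  rcases le_or_gt r (m + 1) with h | h
  · have h0 := Nat.choose_mul_succ_eq m r
    have hc : (((m.choose r) * (m + 1) : ℕ) : ℚ) = (((m + 1).choose r) * (m + 1 - r) : ℕ) := by
      exact_mod_cast congrArg Nat.cast h0
    push_cast [Nat.cast_sub h] at hc
    linarith [hc]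
  · rw [Nat.choose_eq_zero_of_lt (by omega), Nat.choose_eq_zero_of_lt (by omega)]
    simp

private lemma castB (m r : ℕ) :
    ((m.choose (r + 1)) : ℚ) * (r + 1) = (m.choose r) * ((m : ℚ) - r) := by
  rcases le_or_gt r m with h | h
  · have h0 := Nat.choose_succ_right_eq m r
    have hc : (((m.choose (r + 1)) * (r + 1) : ℕ) : ℚ) = ((m.choose r) * (m - r) : ℕ) := by
      exact_mod_cast congrArg Nat.cast h0
    push_cast [Nat.cast_sub h] at hc
    linarith [hc]
  · rw [Nat.choose_eq_zero_of_lt (by omega), Nat.choose_eq_zero_of_lt h]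
    simp

private lemma castS (m r : ℕ) :
    ((m : ℚ) + 1) * (m.choose r) = ((m + 1).choose (r + 1)) * ((r : ℚ) + 1) := by
  exact_mod_cast congrArg Nat.cast (Nat.add_one_mul_choose_eq m r)

private lemma e1 (n k : ℕ) :
    ((n : ℚ) + k + 1) * ((n : ℚ) + k + 2) * ((n + k).choose (2 * k)) =
    ((n : ℚ) + 1 - k) * ((n : ℚ) + 2 - k) * ((n + 2 + k).choose (2 * k)) := by
  have h1 := castA (n + k) (2 * k)
  have h2 := castA (n + k + 1) (2 * k)
  have hrw : n + k + 1 + 1 = n + 2 + k := by omega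
  rw [hrw] at h2
  push_cast at h1 h2 ⊢
  nlinarith [h1, h2]

private lemma e3 (n k : ℕ) :
    2 * ((k : ℚ) + 1) * (2 * k + 1) * ((n + 2 + (k + 1)).choose (2 * (k + 1))) =
    ((n : ℚ) + 2 - k) * ((n : ℚ) + k + 3) * ((n + 2 + k).choose (2 * k)) := by
  have h1 := castS (n + 2 + k) (2 * k)
  have h2 := castB (n + 2 + k + 1) (2 * k + 1)
  have hrw1 : n + 2 + k + 1 = n + 2 + (k + 1) := by omega
  have hrw2 : 2 * k + 1 + 1 = 2 * (k + 1) := by omega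
  rw [hrw1] at h1 h2
  rw [hrw2] at h2
  push_cast at h1 h2 ⊢
  nlinarith [h1, h2]

private lemma point (n k : ℕ) :
    (n : ℚ) * (((n + k).choose (2 * k) : ℚ) * (catalan k : ℚ) / (-2 : ℚ) ^ k) +
      ((n : ℚ) + 3) * (((n + 2 + k).choose (2 * k) : ℚ) * (catalan k : ℚ) / (-2 : ℚ) ^ k) =
    Gcert n (k + 1) - Gcert n k := by
  have hcatQ : ((k : ℚ) + 2) * (catalan (k + 1)) = 2 * (2 * k + 1) * (catalan k) := by
    exact_mod_cast congrArg Nat.cast (cat_rec k)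
  have h1 := e1 n k
  have h3 := e3 n k
  have hne : ((-2 : ℚ)) ^ k ≠ 0 := pow_ne_zero _ (by norm_num)
  have hd1 : ((n : ℚ) + k + 1) ≠ 0 := by positivity
  have hd2 : ((n : ℚ) + k + 2) ≠ 0 := by positivity
  have hd3 : ((n : ℚ) + k + 3) ≠ 0 := by positivity
  unfold Gcert
  push_cast
  rw [pow_succ]
  field_simp
  linear_combination (1 * ((n:ℚ) + k + 2)) *
      (((n:ℚ) * ((n:ℚ) + k + 3) * (catalan k : ℚ)) * h1
        - ((2*(n:ℚ)+3) * ((n:ℚ)+k+1) * ((k:ℚ)+1) * (((n + 2 + (k+1)).choose (2*(k+1)) : ℚ))) * hcatQ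
        - ((2*(n:ℚ)+3) * ((n:ℚ)+k+1) * (catalan k : ℚ)) * h3)

private def Ssum (n : ℕ) : ℚ :=
  ∑ k ∈ Finset.range (n + 1),
    ((n + k).choose (2 * k) : ℚ) * (catalan k : ℚ) / (-2 : ℚ) ^ k

private lemma key (n : ℕ) : (n : ℚ) * Ssum n + ((n : ℚ) + 3) * Ssum (n + 2) = 0 := by
  have hext : Ssum n = ∑ k ∈ Finset.range (n + 3),
      ((n + k).choose (2 * k) : ℚ) * (catalan k : ℚ) / (-2 : ℚ) ^ k := by
    rw [show n + 3 = (n + 1) + 1 + 1 by omega, Finset.sum_range_succ, Finset.sum_range_succ]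
    rw [Nat.choose_eq_zero_of_lt (by omega), Nat.choose_eq_zero_of_lt (by omega)]
    simp [Ssum]
  have h2 : Ssum (n + 2) = ∑ k ∈ Finset.range (n + 3),
      ((n + 2 + k).choose (2 * k) : ℚ) * (catalan k : ℚ) / (-2 : ℚ) ^ k := rfl
  rw [hext, h2, Finset.mul_sum, Finset.mul_sum, ← Finset.sum_add_distrib]
  have hpt : ∀ k ∈ Finset.range (n + 3),
      (n : ℚ) * (((n + k).choose (2 * k) : ℚ) * (catalan k : ℚ) / (-2 : ℚ) ^ k) +
        ((n : ℚ) + 3) * (((n + 2 + k).choose (2 * k) : ℚ) * (catalan k : ℚ) / (-2 : ℚ) ^ k) =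
      Gcert n (k + 1) - Gcert n k := fun k _ => point n k
  rw [Finset.sum_congr rfl hpt, Finset.sum_range_sub (Gcert n)]
  have hG0 : Gcert n 0 = 0 := by simp [Gcert]
  have hGend : Gcert n (n + 3) = 0 := by
    unfold Gcert
    rw [Nat.choose_eq_zero_of_lt (by omega)]
    simp
  rw [hG0, hGend, sub_zero]

private lemma main_lemma_s17 : ∀ n : ℕ, 1 ≤ n → Ssum n =
    (if Odd n then (-1 : ℚ) ^ ((n - 1) / 2) * (catalan ((n - 1) / 2) : ℚ) / 2 ^ n else 0) := by
  intro n
  induction n using Nat.strong_induction_on with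
  | _ n ih =>
    match n with
    | 0 => intro h; omega
    | 1 =>
      intro _
      rw [if_pos (by decide)]
      show (∑ k ∈ Finset.range 2, ((1 + k).choose (2 * k) : ℚ) * (catalan k : ℚ) / (-2 : ℚ) ^ k) = _
      rw [Finset.sum_range_succ, Finset.sum_range_succ, Finset.sum_range_zero]
      norm_num [catalan_one]
    | 2 =>
      intro _
      rw [if_neg (by decide)]
      show (∑ k ∈ Finset.range 3, ((2 + k).choose (2 * k) : ℚ) * (catalan k : ℚ) / (-2 : ℚ) ^ k) = 0
      rw [Finset.sum_range_succ, Finset.sum_range_succ, Finset.sum_range_succ, Finset.sum_range_zero]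
      norm_num [catalan_one, catalan_two]
    | (m + 3) =>
      intro _
      have keyEq := key (m + 1)
      have ihEq := ih (m + 1) (by omega) (by omega)
      have hrw : m + 1 + 2 = m + 3 := by omega
      rw [hrw] at keyEq
      have hm4 : ((m : ℚ) + 1 + 3) ≠ 0 := by positivity
      rcases Nat.even_or_odd m with ⟨j, hj⟩ | hodd
      · -- m = j + j, so m+1 and m+3 odd
        have ho1 : Odd (m + 1) := ⟨j, by omega⟩
        have ho3 : Odd (m + 3) := ⟨j + 1, by omega⟩
        rw [if_pos ho1, show (m + 1 - 1) / 2 = j from by omega] at ihEq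
        rw [if_pos ho3, show (m + 3 - 1) / 2 = j + 1 from by omega]
        have hcatQ : ((j : ℚ) + 2) * (catalan (j + 1)) = 2 * (2 * j + 1) * (catalan j) := by
          exact_mod_cast congrArg Nat.cast (cat_rec j)
        subst hj
        push_cast at keyEq ihEq ⊢
        apply mul_left_cancel₀ hm4
        push_cast
        linear_combination keyEq - (2 * (j : ℚ) + 1) * ihEq
          + ((-1 : ℚ) ^ j / 2 ^ (j + j + 2)) * hcatQ
      · -- m odd, so m+1 and m+3 even
        have he1 : ¬ Odd (m + 1) := by
          rw [Nat.odd_iff] at hodd ⊢; omega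
        have he3 : ¬ Odd (m + 3) := by
          rw [Nat.odd_iff] at hodd ⊢; omega
        rw [if_neg he1] at ihEq
        rw [if_neg he3]
        rw [ihEq] at keyEq
        push_cast at keyEq
        have h0 : ((m : ℚ) + 1 + 3) * Ssum (m + 3) = 0 := by linear_combination keyEq
        exact (mul_eq_zero.mp h0).resolve_left hm4

theorem stmt_17 (n : ℕ) (hn : 1 ≤ n) :
    ∑ k ∈ Finset.range (n + 1),
      ((n + k).choose (2 * k) : ℚ) * (catalan k : ℚ) / (-2 : ℚ) ^ k =
    if Odd n then (-1 : ℚ) ^ ((n - 1) / 2) * (catalan ((n - 1) / 2) : ℚ) / 2 ^ n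
    else 0 := by
  simpa [Ssum] using main_lemma_s17 n hn
end
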